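/- For each n ≥ 1 let π_n be a stationary distribution of the reflected random walk on the path with n+2 vertices (π_n ≥ 0, Σ_{i=0}^{n+1} π_n(i) = 1, π_n P = π_n). Then lim_{n→∞} π_n(0) = c_0/2, and for every fixed i ≥ 1, lim_{n→∞} π_n(i) = c_i, where c_0 = 1 − p/q if p < q and c_0 = 0 otherwise, and c_i = (1/(2q))(1 − p/q)(p/q)^{i−1} if p < q and c_i = 0 otherwise. -/

import Mathlib

open Filter Finset

/-- The transition probabilities of the reflected random walk on the path with vertex set
`{0, 1, …, n+1}`, as a function of natural-number indices: `P(0,1) = 1`, `P(n+1,n) = 1`,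
`P(i,i+1) = p` and `P(i,i-1) = q` for `1 ≤ i ≤ n`, and `P(i,j) = 0` otherwise. -/
noncomputable def rwEntry (p q : ℝ) (n i j : ℕ) : ℝ :=
  if i = 0 then (if j = 1 then 1 else 0)
  else if i = n + 1 then (if j = n then 1 else 0)
  else if i ≤ n then (if j = i + 1 then p else if j + 1 = i then q else 0)
  else 0

/-- The point masses `c_i` of the weak limit theorem: `c_0 = 1 - p/q` if `p < q`
(else `0`), and `c_i = (1/(2q))(1 - p/q)(p/q)^{i-1}` for `i ≥ 1` if `p < q` (else `0`). -/
noncomputable def cmass (p q : ℝ) (i : ℕ) : ℝ :=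
  if p < q then
    (if i = 0 then 1 - p / q else (1 / (2 * q)) * (1 - p / q) * (p / q) ^ (i - 1))
  else 0

lemma rwEntry_eq_zero (p q : ℝ) {n i j : ℕ} (h1 : i ≠ j + 1) (h2 : j ≠ i + 1) :
    rwEntry p q n i j = 0 := by
  unfold rwEntry; split_ifs <;> first | rfl | omega | contradiction

lemma rwEntry_up (p q : ℝ) {n i : ℕ} (h1 : 1 ≤ i) (h2 : i ≤ n) :
    rwEntry p q n i (i + 1) = p := by
  unfold rwEntry; split_ifs <;> first | rfl | omega | contradiction

lemma rwEntry_down (p q : ℝ) {n i : ℕ} (h : i + 1 ≤ n) :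
    rwEntry p q n (i + 1) i = q := by
  unfold rwEntry; split_ifs <;> first | rfl | omega | contradiction

lemma rwEntry_zero_one (p q : ℝ) {n : ℕ} (hn : 1 ≤ n) : rwEntry p q n 0 1 = 1 := by
  unfold rwEntry; split_ifs <;> first | rfl | omega | contradiction

lemma rwEntry_overflow (p q : ℝ) (n : ℕ) : rwEntry p q n (n + 2) (n + 1) = 0 := by
  unfold rwEntry; split_ifs <;> first | rfl | omega | contradiction

lemma rw_sum_collapse (p q : ℝ) (n j : ℕ) (hj : j ≤ n + 1) (f : ℕ → ℝ) :
    ∑ i ∈ Finset.range (n + 2), f i * rwEntry p q n i j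
      = f (j - 1) * rwEntry p q n (j - 1) j + f (j + 1) * rwEntry p q n (j + 1) j := by
  have hpt : ∀ i, f i * rwEntry p q n i j =
      (if i = j - 1 then f i * rwEntry p q n i j else 0)
      + (if i = j + 1 then f i * rwEntry p q n i j else 0) := by
    intro i
    by_cases h1 : i = j - 1
    · by_cases h2 : i = j + 1
      · omega
      · subst h1; rw [if_pos rfl, if_neg h2, add_zero]
    · by_cases h2 : i = j + 1
      · subst h2; rw [if_neg h1, if_pos rfl, zero_add]
      · rw [rwEntry_eq_zero p q h2 (by omega)]
        simp [h1, h2]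
  rw [Finset.sum_congr rfl (fun i _ => hpt i), Finset.sum_add_distrib,
      Finset.sum_ite_eq', Finset.sum_ite_eq']
  rw [if_pos (by simp; omega : j - 1 ∈ Finset.range (n + 2))]
  by_cases hb : j + 1 ∈ Finset.range (n + 2)
  · rw [if_pos hb]
  · rw [if_neg hb]
    have hj1 : j = n + 1 := by simp only [Finset.mem_range] at hb; omega
    subst hj1
    rw [rwEntry_overflow]; ring

lemma rw_master (p q : ℝ) (hp0 : 0 < p) (hq0 : 0 < q) (hpq : p + q = 1)
    (n : ℕ) (hn : 1 ≤ n) (a : ℕ → ℝ)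
    (hsum : ∑ i ∈ Finset.range (n + 2), a i = 1)
    (hstat : ∀ j, j ≤ n + 1 → ∑ i ∈ Finset.range (n + 2), a i * rwEntry p q n i j = a j) :
    a 1 = (q + (∑ k ∈ Finset.range n, (p / q) ^ k) + p * (p / q) ^ (n - 1))⁻¹ ∧
    a 0 = q * a 1 ∧ (∀ i, 1 ≤ i → i ≤ n → a i = (p / q) ^ (i - 1) * a 1) := by
  have hq : q ≠ 0 := ne_of_gt hq0
  have H : ∀ j, j ≤ n + 1 →
      a (j - 1) * rwEntry p q n (j - 1) j + a (j + 1) * rwEntry p q n (j + 1) j = a j := by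
    intro j hj
    rw [← rw_sum_collapse p q n j hj a]; exact hstat j hj
  -- a 0 = q * a 1
  have h0 : a 0 = q * a 1 := by
    have h := H 0 (by omega)
    norm_num at h
    rw [rwEntry_eq_zero p q (by omega) (by omega)] at h
    rw [show (1 : ℕ) = 0 + 1 from rfl, rwEntry_down p q (by omega : 0 + 1 ≤ n)] at h
    linarith
  -- the detailed balance in the interior
  have hQ : ∀ i, 1 ≤ i → i + 1 ≤ n → q * a (i + 1) = p * a i := by
    intro i
    induction i with
    | zero => intro h; omega
    | succ k ih =>
      intro _ hk2
      have h := H (k + 1) (by omega)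
      simp only [Nat.add_sub_cancel] at h
      rw [show k + 1 + 1 = (k + 1) + 1 from rfl, rwEntry_down p q (by omega : (k + 1) + 1 ≤ n)] at h
      rcases Nat.eq_zero_or_pos k with hk0 | hk1
      · subst hk0
        rw [rwEntry_zero_one p q hn] at h
        norm_num at h ⊢
        linear_combination h - h0 - a 1 * hpq
      · rw [rwEntry_up p q hk1 (by omega)] at h
        have hih := ih hk1 (by omega)
        linear_combination h + hih - a (k + 1) * hpq
  -- explicit geometric form
  have hF : ∀ i, 1 ≤ i → i ≤ n → a i = (p / q) ^ (i - 1) * a 1 := by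
    intro i
    induction i with
    | zero => intro h; omega
    | succ k ih =>
      intro _ hk
      rcases Nat.eq_zero_or_pos k with hk0 | hk1
      · subst hk0; norm_num
      · have h1 : a (k + 1) = (p * a k) / q := by
          rw [eq_div_iff hq]; linarith [hQ k hk1 hk]
        have h2 := ih hk1 (by omega)
        rw [h1, h2, Nat.add_sub_cancel]
        have hkk : k = (k - 1) + 1 := by omega
        rw [hkk] at *
        rw [pow_succ]
        simp only [Nat.add_sub_cancel]
        field_simp
      done
  -- top relation
  have htop : a (n + 1) = p * a n := by
    have h := H (n + 1) (by omega)
    simp only [Nat.add_sub_cancel] at h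
    rw [rwEntry_up p q hn (le_refl n), rwEntry_overflow] at h
    linarith
  -- the normalization
  have hS1 : a 0 + (∑ k ∈ Finset.range n, a (k + 1)) + a (n + 1) = 1 := by
    rw [← hsum, Finset.sum_range_succ, Finset.sum_range_succ' a n]
    ring
  have e1 : ∑ k ∈ Finset.range n, a (k + 1) = (∑ k ∈ Finset.range n, (p / q) ^ k) * a 1 := by
    rw [Finset.sum_mul]
    refine Finset.sum_congr rfl fun k hk => ?_
    rw [Finset.mem_range] at hk
    have := hF (k + 1) (by omega) (by omega)
    simpa using this
  have e2 : a (n + 1) = p * ((p / q) ^ (n - 1) * a 1) := by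
    rw [htop, hF n hn (le_refl n)]
  have hmul : (q + (∑ k ∈ Finset.range n, (p / q) ^ k) + p * (p / q) ^ (n - 1)) * a 1 = 1 := by
    calc (q + (∑ k ∈ Finset.range n, (p / q) ^ k) + p * (p / q) ^ (n - 1)) * a 1
        = q * a 1 + (∑ k ∈ Finset.range n, (p / q) ^ k) * a 1
            + p * ((p / q) ^ (n - 1) * a 1) := by ring
      _ = a 0 + (∑ k ∈ Finset.range n, a (k + 1)) + a (n + 1) := by rw [h0, e1, e2]
      _ = 1 := hS1
  exact ⟨eq_inv_of_mul_eq_one_right hmul, h0, hF⟩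


/-- **Lemma (limits of the stationary distributions).** If for each `n ≥ 1`, `π_n` is a
stationary distribution of the reflected random walk on the path with `n+2` vertices,
then `π_n(0) → c_0/2` and `π_n(i) → c_i` for every fixed `i ≥ 1`, as `n → ∞`. -/
theorem stationary_distribution_limits
    (p q : ℝ) (hp0 : 0 < p) (hp1 : p < 1) (hq0 : 0 < q) (hq1 : q < 1) (hpq : p + q = 1)
    (Pi : ℕ → ℕ → ℝ)
    (hnonneg : ∀ n, 1 ≤ n → ∀ i, i ≤ n + 1 → 0 ≤ Pi n i)
    (hsum : ∀ n, 1 ≤ n → ∑ i ∈ Finset.range (n + 2), Pi n i = 1)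
    (hstat : ∀ n, 1 ≤ n → ∀ j, j ≤ n + 1 →
      ∑ i ∈ Finset.range (n + 2), Pi n i * rwEntry p q n i j = Pi n j) :
    Tendsto (fun n : ℕ => Pi n 0) atTop (nhds (cmass p q 0 / 2)) ∧
    ∀ i, 1 ≤ i → Tendsto (fun n : ℕ => Pi n i) atTop (nhds (cmass p q i)) := by
  have hq : q ≠ 0 := ne_of_gt hq0
  set r : ℝ := p / q with hr
  have hr0 : 0 ≤ r := div_nonneg hp0.le hq0.le
  set D : ℕ → ℝ := fun n => q + (∑ k ∈ Finset.range n, r ^ k) + p * r ^ (n - 1) with hD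
  -- the master identities, for n ≥ 1
  have hm : ∀ n : ℕ, 1 ≤ n →
      Pi n 1 = (D n)⁻¹ ∧ Pi n 0 = q * Pi n 1 ∧
      (∀ i, 1 ≤ i → i ≤ n → Pi n i = r ^ (i - 1) * Pi n 1) :=
    fun n hn => rw_master p q hp0 hq0 hpq n hn (Pi n) (hsum n hn) (hstat n hn)
  -- limit of (D n)⁻¹
  obtain ⟨L, hL, hLval⟩ :
      ∃ L : ℝ, Tendsto (fun n => (D n)⁻¹) atTop (nhds L) ∧
        (if p < q then L = (1 / (2 * q)) * (1 - r) else L = 0) := by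
    by_cases hc : p < q
    · have hr1 : r < 1 := (div_lt_one hq0).2 hc
      have hs : Tendsto (fun n => ∑ k ∈ Finset.range n, r ^ k) atTop (nhds (1 - r)⁻¹) :=
        (hasSum_geometric_of_lt_one hr0 hr1).tendsto_sum_nat
      have hp' : Tendsto (fun n : ℕ => p * r ^ (n - 1)) atTop (nhds (p * 0)) :=
        Tendsto.const_mul p
          ((tendsto_pow_atTop_nhds_zero_of_lt_one hr0 hr1).comp (tendsto_sub_atTop_nat 1))
      have hDlim : Tendsto D atTop (nhds (q + (1 - r)⁻¹ + p * 0)) :=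
        (tendsto_const_nhds.add hs).add hp'
      have hpos : 0 < q + (1 - r)⁻¹ + p * 0 := by
        have : 0 < (1 - r)⁻¹ := inv_pos.2 (by linarith)
        linarith
      refine ⟨(q + (1 - r)⁻¹ + p * 0)⁻¹, hDlim.inv₀ (ne_of_gt hpos), ?_⟩
      rw [if_pos hc, mul_zero, add_zero]
      have hp2 : p = 1 - q := by linarith
      have h2q : 2 * q - 1 ≠ 0 := ne_of_gt (by linarith)
      rw [hr, hp2]
      symm
      apply eq_inv_of_mul_eq_one_right
      have h1 : (1 - (1 - q) / q) = (2 * q - 1) / q := by field_simp; ring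
      rw [h1, inv_div, add_div' _ _ _ h2q]; field_simp; rw [mul_comm q 2, mul_div_cancel_left₀ _ h2q]; ring
    · have hr1 : 1 ≤ r := (one_le_div hq0).2 (le_of_not_gt hc)
      have hmono : ∀ n : ℕ, (n : ℝ) ≤ D n := by
        intro n
        have h1 : (n : ℝ) ≤ ∑ k ∈ Finset.range n, r ^ k := by
          calc (n : ℝ) = ∑ _k ∈ Finset.range n, (1 : ℝ) := by simp
            _ ≤ ∑ k ∈ Finset.range n, r ^ k :=
                Finset.sum_le_sum fun k _ => one_le_pow₀ hr1
        have h2 : 0 ≤ p * r ^ (n - 1) := mul_nonneg hp0.le (pow_nonneg hr0 _)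
        simp only [hD]
        linarith
      refine ⟨0, ?_, by rw [if_neg hc]⟩
      exact (tendsto_atTop_mono hmono tendsto_natCast_atTop_atTop).inv_tendsto_atTop
  constructor
  · -- Pi n 0 → cmass 0 / 2
    have h1 : Tendsto (fun n => q * (D n)⁻¹) atTop (nhds (q * L)) := hL.const_mul q
    have heq : (fun n : ℕ => Pi n 0) =ᶠ[atTop] fun n => q * (D n)⁻¹ := by
      filter_upwards [eventually_ge_atTop 1] with n hn
      obtain ⟨ha1, ha0, _⟩ := hm n hn
      rw [ha0, ha1]
    have hval : q * L = cmass p q 0 / 2 := by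
      by_cases hc : p < q
      · rw [if_pos hc] at hLval
        simp only [cmass, if_pos hc, if_pos rfl, ↓reduceIte]
        rw [hLval, hr]
        field_simp
      · rw [if_neg hc] at hLval
        simp only [cmass, if_neg hc, hLval]
        ring
    rw [← hval]
    exact h1.congr' heq.symm
  · intro i hi
    have h1 : Tendsto (fun n => r ^ (i - 1) * (D n)⁻¹) atTop (nhds (r ^ (i - 1) * L)) :=
      hL.const_mul _
    have heq : (fun n : ℕ => Pi n i) =ᶠ[atTop] fun n => r ^ (i - 1) * (D n)⁻¹ := by
      filter_upwards [eventually_ge_atTop i, eventually_ge_atTop 1] with n hni hn1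
      obtain ⟨ha1, _, haF⟩ := hm n hn1
      rw [haF i hi hni, ha1]
    have hval : r ^ (i - 1) * L = cmass p q i := by
      by_cases hc : p < q
      · rw [if_pos hc] at hLval
        have : i ≠ 0 := by omega
        simp only [cmass, if_pos hc, if_neg this]
        rw [hLval, hr]
        ring
      · rw [if_neg hc] at hLval
        simp only [cmass, if_neg hc, hLval]
        ring
    rw [← hval]
    exact h1.congr' heq.symm
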